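/- For every n ≥ 0, the leading coefficients satisfy r_n^{[2]} = r_{n+1}·(K_n(c,c)/K_{n+1}(c,c))^{1/2}; equivalently, K_{n+1}(c,c)/K_n(c,c) = (r_{n+1}/r_n^{[2]})². -/

import Mathlib

open MeasureTheory Polynomial

/-- Squared norm `‖Q‖_μ² = ∫ Q(x)² dμ`. -/
noncomputable def nrmSq (μ : Measure ℝ) (Q : Polynomial ℝ) : ℝ := ∫ x, Q.eval x ^ 2 ∂μ

/-- Squared norm in the 2-iterated Christoffel measure `(x-c)² dμ`. -/
noncomputable def nrmSq2 (μ : Measure ℝ) (c : ℝ) (Q : Polynomial ℝ) : ℝ :=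
  ∫ x, Q.eval x ^ 2 * (x - c) ^ 2 ∂μ

/-- Sobolev-type inner product `⟨f,g⟩_S = ∫ f g dμ + M f(c) g(c) + N f'(c) g'(c)`. -/
noncomputable def ipS (μ : Measure ℝ) (c M N : ℝ) (f g : Polynomial ℝ) : ℝ :=
  (∫ x, f.eval x * g.eval x ∂μ) + M * (f.eval c * g.eval c)
    + N * ((derivative f).eval c * (derivative g).eval c)

/-- Leading coefficient `r_n = 1/‖P_n‖_μ` of the orthonormal polynomial `p_n`. -/
noncomputable def rC (μ : Measure ℝ) (P : ℕ → Polynomial ℝ) (n : ℕ) : ℝ :=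
  1 / Real.sqrt (nrmSq μ (P n))

/-- Leading coefficient `r_n^{[2]} = 1/‖P_n^{[2]}‖_{[2]}`. -/
noncomputable def r2C (μ : Measure ℝ) (c : ℝ) (P2 : ℕ → Polynomial ℝ) (n : ℕ) : ℝ :=
  1 / Real.sqrt (nrmSq2 μ c (P2 n))

/-- Orthonormal polynomial `p_n = P_n/‖P_n‖_μ`. -/
noncomputable def onP (μ : Measure ℝ) (P : ℕ → Polynomial ℝ) (n : ℕ) : Polynomial ℝ :=
  C (rC μ P n) * P n

/-- Orthonormal polynomial `p_n^{[2]} = P_n^{[2]}/‖P_n^{[2]}‖_{[2]}`. -/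
noncomputable def onP2 (μ : Measure ℝ) (c : ℝ) (P2 : ℕ → Polynomial ℝ) (n : ℕ) : Polynomial ℝ :=
  C (r2C μ c P2 n) * P2 n

/-- Leading coefficient `t_n = 1/‖S_n^{M,N}‖_S` of the Sobolev-type orthonormal polynomial. -/
noncomputable def tC (μ : Measure ℝ) (c M N : ℝ) (S : ℕ → Polynomial ℝ) (n : ℕ) : ℝ :=
  1 / Real.sqrt (ipS μ c M N (S n) (S n))

/-- Sobolev-type orthonormal polynomial `s_n^{M,N} = S_n^{M,N}/‖S_n^{M,N}‖_S`. -/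
noncomputable def sN (μ : Measure ℝ) (c M N : ℝ) (S : ℕ → Polynomial ℝ) (n : ℕ) : Polynomial ℝ :=
  C (tC μ c M N S n) * S n

/-- Diagonal kernel value `K_n(c,c) = Σ_{j=0}^n P_j(c)²/‖P_j‖_μ²`. -/
noncomputable def Kcc (μ : Measure ℝ) (P : ℕ → Polynomial ℝ) (c : ℝ) (n : ℕ) : ℝ :=
  ∑ j ∈ Finset.range (n + 1), (P j).eval c ^ 2 / nrmSq μ (P j)

/-- Kernel `K_n^{(0,j)}(x,c)` as a polynomial in `x`:
`Σ_{k=0}^n (d/dy)^j P_k(y)|_{y=c} · P_k(x)/‖P_k‖_μ²`. -/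
noncomputable def Kpoly (μ : Measure ℝ) (P : ℕ → Polynomial ℝ) (c : ℝ) (n j : ℕ) : Polynomial ℝ :=
  ∑ k ∈ Finset.range (n + 1), C ((derivative^[j] (P k)).eval c / nrmSq μ (P k)) * P k

/-- Mixed derivative of the kernel at the diagonal:
`K_n^{(i,j)}(c,c) = Σ_{k=0}^n P_k^{(i)}(c) P_k^{(j)}(c)/‖P_k‖_μ²`. -/
noncomputable def Kder (μ : Measure ℝ) (P : ℕ → Polynomial ℝ) (c : ℝ) (n i j : ℕ) : ℝ :=
  ∑ k ∈ Finset.range (n + 1),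
    (derivative^[i] (P k)).eval c * (derivative^[j] (P k)).eval c / nrmSq μ (P k)

/-- Connection coefficient `d_n`. -/
noncomputable def dCoef (P : ℕ → Polynomial ℝ) (c : ℝ) (n : ℕ) : ℝ :=
  ((P (n + 2)).eval c * (derivative (P n)).eval c
      - (derivative (P (n + 2))).eval c * (P n).eval c) /
    ((P (n + 1)).eval c * (derivative (P n)).eval c
      - (derivative (P (n + 1))).eval c * (P n).eval c)

/-- Connection coefficient `e_n`. -/
noncomputable def eCoef (P : ℕ → Polynomial ℝ) (c : ℝ) (n : ℕ) : ℝ :=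
  ((P (n + 2)).eval c * (derivative (P (n + 1))).eval c
      - (derivative (P (n + 2))).eval c * (P (n + 1)).eval c) /
    ((P (n + 1)).eval c * (derivative (P n)).eval c
      - (derivative (P (n + 1))).eval c * (P n).eval c)

/-- Connection coefficient `γ_{j,n} = ⟨s_n^{M,N}, p_j^{[2]}⟩_{[2]}`. -/
noncomputable def gamC (μ : Measure ℝ) (c M N : ℝ) (S P2 : ℕ → Polynomial ℝ) (j n : ℕ) : ℝ :=
  ∫ x, (sN μ c M N S n).eval x * (onP2 μ c P2 j).eval x * (x - c) ^ 2 ∂μ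

/-- Jacobi matrix of `μ`: `J(n,m) = ∫ x p_n(x) p_m(x) dμ`. -/
noncomputable def Jmat (μ : Measure ℝ) (P : ℕ → Polynomial ℝ) (n m : ℕ) : ℝ :=
  ∫ x, x * ((onP μ P n).eval x * (onP μ P m).eval x) ∂μ

/-- Jacobi matrix of `(x-c)² dμ`: `J_{[2]}(n,m) = ∫ x p_n^{[2]}(x) p_m^{[2]}(x) (x-c)² dμ`. -/
noncomputable def J2mat (μ : Measure ℝ) (c : ℝ) (P2 : ℕ → Polynomial ℝ) (n m : ℕ) : ℝ :=
  ∫ x, x * ((onP2 μ c P2 n).eval x * (onP2 μ c P2 m).eval x) * (x - c) ^ 2 ∂μ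

/-- Five-diagonal matrix `H(n,m) = ⟨(x-c)² s_n^{M,N}, s_m^{M,N}⟩_S`. -/
noncomputable def Hmat (μ : Measure ℝ) (c M N : ℝ) (S : ℕ → Polynomial ℝ) (n m : ℕ) : ℝ :=
  ipS μ c M N ((X - C c) ^ 2 * sN μ c M N S n) (sN μ c M N S m)

/-- Kronecker delta. -/
noncomputable def kdel (n m : ℕ) : ℝ := if n = m then 1 else 0

noncomputable def Bi (μ : Measure ℝ) (f g : Polynomial ℝ) : ℝ := ∫ x, f.eval x * g.eval x ∂μ

variable {μ : Measure ℝ}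

lemma integ_poly (hmom : ∀ n : ℕ, Integrable (fun x : ℝ => x ^ n) μ)
    (f : Polynomial ℝ) : Integrable (fun x => f.eval x) μ := by
  have h : (fun x : ℝ => f.eval x)
      = fun x => ∑ i ∈ Finset.range (f.natDegree + 1), f.coeff i * x ^ i := by
    funext x; rw [Polynomial.eval_eq_sum_range]
  rw [h]
  exact integrable_finset_sum _ fun i _ => (hmom i).const_mul _

lemma integ_poly2 (hmom : ∀ n : ℕ, Integrable (fun x : ℝ => x ^ n) μ)
    (f g : Polynomial ℝ) : Integrable (fun x => f.eval x * g.eval x) μ := by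
  have := integ_poly hmom (f * g)
  simpa [Polynomial.eval_mul] using this

lemma Bi_symm (f g : Polynomial ℝ) : Bi μ f g = Bi μ g f := by
  simp [Bi, mul_comm]

lemma Bi_self (f : Polynomial ℝ) : Bi μ f f = nrmSq μ f := by
  simp [Bi, nrmSq, pow_two]

lemma Bi_smul_left (a : ℝ) (f g : Polynomial ℝ) : Bi μ (C a * f) g = a * Bi μ f g := by
  simp [Bi, mul_assoc, integral_const_mul]

lemma Bi_smul_right (a : ℝ) (f g : Polynomial ℝ) : Bi μ f (C a * g) = a * Bi μ f g := by
  rw [Bi_symm, Bi_smul_left, Bi_symm]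

lemma Bi_sub_left (hmom : ∀ n : ℕ, Integrable (fun x : ℝ => x ^ n) μ)
    (f g h : Polynomial ℝ) : Bi μ (f - g) h = Bi μ f h - Bi μ g h := by
  simp only [Bi, Polynomial.eval_sub, sub_mul]
  exact integral_sub (integ_poly2 hmom f h) (integ_poly2 hmom g h)

lemma Bi_sub_right (hmom : ∀ n : ℕ, Integrable (fun x : ℝ => x ^ n) μ)
    (f g h : Polynomial ℝ) : Bi μ f (g - h) = Bi μ f g - Bi μ f h := by
  rw [Bi_symm, Bi_sub_left hmom, Bi_symm g f, Bi_symm h f]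

lemma Bi_sum_left (hmom : ∀ n : ℕ, Integrable (fun x : ℝ => x ^ n) μ)
    {ι : Type*} (s : Finset ι) (f : ι → Polynomial ℝ) (g : Polynomial ℝ) :
    Bi μ (∑ i ∈ s, f i) g = ∑ i ∈ s, Bi μ (f i) g := by
  simp only [Bi, Polynomial.eval_finset_sum, Finset.sum_mul]
  exact integral_finset_sum s fun i _ => integ_poly2 hmom (f i) g

lemma Bi_sum_right (hmom : ∀ n : ℕ, Integrable (fun x : ℝ => x ^ n) μ)
    {ι : Type*} (s : Finset ι) (f : Polynomial ℝ) (g : ι → Polynomial ℝ) :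
    Bi μ f (∑ i ∈ s, g i) = ∑ i ∈ s, Bi μ f (g i) := by
  rw [Bi_symm, Bi_sum_left hmom]
  exact Finset.sum_congr rfl fun i _ => Bi_symm _ _

lemma degCmul (a : ℝ) (p : Polynomial ℝ) : (C a * p).degree ≤ p.degree := by
  refine le_trans (degree_mul_le _ _) ?_
  calc degree (C a) + degree p ≤ 0 + degree p := add_le_add degree_C_le le_rfl
  _ = degree p := zero_add _

lemma span_monic (Q : ℕ → Polynomial ℝ) (hQm : ∀ k, (Q k).Monic)
    (hQd : ∀ k, (Q k).natDegree = k) :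
    ∀ m : ℕ, ∀ f : Polynomial ℝ, f.degree ≤ (m : ℕ) →
      ∃ a : ℕ → ℝ, f = ∑ j ∈ Finset.range (m + 1), C (a j) * Q j := by
  intro m
  induction m with
  | zero =>
    intro f hf
    have hQ0 : Q 0 = 1 := (hQm 0).natDegree_eq_zero.mp (hQd 0)
    refine ⟨fun _ => f.coeff 0, ?_⟩
    simp [hQ0, ← Polynomial.eq_C_of_degree_le_zero (by exact_mod_cast hf)]
  | succ m ih =>
    intro f hf
    set g := f - C (f.coeff (m + 1)) * Q (m + 1) with hg
    have hdegQ : (C (f.coeff (m + 1)) * Q (m + 1)).degree ≤ ((m+1 : ℕ) : WithBot ℕ) :=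
      le_trans (degCmul _ _) (by rw [Polynomial.degree_eq_natDegree (hQm (m+1)).ne_zero, hQd])
    have hgd : g.degree ≤ (m : ℕ) := by
      rw [Polynomial.degree_le_iff_coeff_zero]
      intro k hk
      have hk1 : (m : ℕ) < k := by exact_mod_cast hk
      rcases eq_or_lt_of_le (Nat.succ_le_of_lt hk1) with h | h
      · have hcoef : (Q (m+1)).coeff (m+1) = 1 := by
          have := (hQm (m+1)).coeff_natDegree
          rwa [hQd] at this
        simp [hg, ← h, hcoef]
      · have h1 : f.coeff k = 0 := by
          apply Polynomial.coeff_eq_zero_of_degree_lt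
          exact lt_of_le_of_lt hf (by exact_mod_cast h)
        have h2 : (C (f.coeff (m + 1)) * Q (m + 1)).coeff k = 0 := by
          apply Polynomial.coeff_eq_zero_of_degree_lt
          exact lt_of_le_of_lt hdegQ (by exact_mod_cast h)
        simp [hg, h1, h2]
    obtain ⟨a, ha⟩ := ih g hgd
    refine ⟨fun j => if j = m + 1 then f.coeff (m + 1) else a j, ?_⟩
    rw [Finset.sum_range_succ]
    have : ∑ j ∈ Finset.range (m + 1),
        C (if j = m + 1 then f.coeff (m + 1) else a j) * Q j
        = ∑ j ∈ Finset.range (m + 1), C (a j) * Q j := by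
      apply Finset.sum_congr rfl
      intro j hj
      rw [Finset.mem_range] at hj
      simp [Nat.ne_of_lt hj]
    rw [this, ← ha]
    simp [hg]

noncomputable def KpAux (μ : Measure ℝ) (P : ℕ → Polynomial ℝ) (c : ℝ) (m : ℕ) : Polynomial ℝ :=
  ∑ k ∈ Finset.range (m + 1), C ((P k).eval c / nrmSq μ (P k)) * P k

section Kernel
variable (hmom : ∀ n : ℕ, Integrable (fun x : ℝ => x ^ n) μ)
  (hpos : ∀ q : Polynomial ℝ, q ≠ 0 → 0 < ∫ x, q.eval x ^ 2 ∂μ)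
  (P : ℕ → Polynomial ℝ) (hPm : ∀ n, (P n).Monic) (hPd : ∀ n, (P n).natDegree = n)
  (hPo : ∀ m n, m ≠ n → ∫ x, (P m).eval x * (P n).eval x ∂μ = 0)
  (c : ℝ)

include hpos hPm in
lemma N2pos : ∀ k, 0 < nrmSq μ (P k) := fun k => hpos (P k) (hPm k).ne_zero

include hPo in
lemma BiP (k j : ℕ) : Bi μ (P k) (P j) = if k = j then nrmSq μ (P k) else 0 := by
  by_cases h : k = j
  · subst h; simp [Bi_self]
  · simp [h, Bi, hPo k j h]

lemma Kp_eval (x : ℝ) :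
    (KpAux μ P c m).eval x
      = ∑ k ∈ Finset.range (m + 1), (P k).eval c / nrmSq μ (P k) * (P k).eval x := by
  simp [KpAux, Polynomial.eval_finset_sum]

lemma Kp_eval_c : (KpAux μ P c m).eval c = Kcc μ P c m := by
  rw [Kp_eval, Kcc]
  apply Finset.sum_congr rfl
  intro k _
  rw [pow_two]; ring

include hPm hPd in
lemma Kp_degree (m : ℕ) : (KpAux μ P c m).degree ≤ (m : ℕ) := by
  refine le_trans (Polynomial.degree_sum_le _ _) ?_
  rw [Finset.sup_le_iff]
  intro k hk
  rw [Finset.mem_range] at hk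
  refine le_trans (degCmul _ _) ?_
  rw [Polynomial.degree_eq_natDegree (hPm k).ne_zero, hPd]
  exact_mod_cast Nat.lt_succ_iff.mp hk

include hmom hpos hPm hPd hPo in
lemma repro (m : ℕ) (f : Polynomial ℝ) (hf : f.degree ≤ (m : ℕ)) :
    Bi μ (KpAux μ P c m) f = f.eval c := by
  obtain ⟨a, ha⟩ := span_monic P hPm hPd m f hf
  subst ha
  rw [KpAux, Bi_sum_left hmom]
  have key : ∀ k ∈ Finset.range (m+1),
      Bi μ (C ((P k).eval c / nrmSq μ (P k)) * P k)
        (∑ j ∈ Finset.range (m + 1), C (a j) * P j)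
        = a k * (P k).eval c := by
    intro k hk
    rw [Bi_smul_left, Bi_sum_right hmom]
    have : ∀ j ∈ Finset.range (m+1), Bi μ (P k) (C (a j) * P j)
        = if k = j then a k * nrmSq μ (P k) else 0 := by
      intro j _
      rw [Bi_smul_right, BiP P hPo]
      by_cases h : k = j <;> simp [h, mul_comm]
    rw [Finset.sum_congr rfl this, Finset.sum_ite_eq (Finset.range (m+1)) k fun _ => a k * nrmSq μ (P k)]
    rw [if_pos hk]
    have hN : nrmSq μ (P k) ≠ 0 := ne_of_gt (hpos (P k) (hPm k).ne_zero)
    field_simp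
  rw [Finset.sum_congr rfl key]
  simp [Polynomial.eval_finset_sum, mul_comm]

include hpos hPm hPd in
lemma Kcc_pos (m : ℕ) : 0 < Kcc μ P c m := by
  rw [Kcc]
  apply Finset.sum_pos'
  · intro j _
    exact div_nonneg (sq_nonneg _) (le_of_lt (hpos (P j) (hPm j).ne_zero))
  · refine ⟨0, Finset.mem_range.mpr (Nat.succ_pos m), ?_⟩
    have hP0 : P 0 = 1 := (hPm 0).natDegree_eq_zero.mp (hPd 0)
    rw [hP0]
    simp only [Polynomial.eval_one, one_pow]
    exact div_pos one_pos (hpos 1 one_ne_zero)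

include hmom hpos hPm hPd hPo in
lemma BiKp {a b : ℕ} (hab : b ≤ a) :
    Bi μ (KpAux μ P c a) (KpAux μ P c b) = Kcc μ P c b := by
  rw [repro hmom hpos P hPm hPd hPo c a _ (le_trans (Kp_degree P hPm hPd c b) (by exact_mod_cast hab)),
    Kp_eval_c]

include hmom hpos hPm hPd hPo in
lemma Peval_ne (hc : ∀ᵐ x ∂μ, c < x) (k : ℕ) : (P k).eval c ≠ 0 := by
  intro hroot
  have hdvd : (X - C c) * (P k /ₘ (X - C c)) = P k :=
    Polynomial.mul_divByMonic_eq_iff_isRoot.mpr hroot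
  set g := P k /ₘ (X - C c) with hgdef
  have hgne : g ≠ 0 := by
    intro h
    apply (hPm k).ne_zero
    rw [← hdvd, h, mul_zero]
  have hXne : (X - C c : Polynomial ℝ) ≠ 0 := Polynomial.X_sub_C_ne_zero c
  have hk1 : k = 1 + g.natDegree := by
    have := Polynomial.natDegree_mul hXne hgne
    rw [hdvd, hPd, Polynomial.natDegree_X_sub_C] at this
    exact this
  have hgd : g.degree ≤ ((g.natDegree : ℕ) : WithBot ℕ) := Polynomial.degree_le_natDegree
  -- orthogonality : Bi (P k) g = 0
  obtain ⟨av, hav⟩ := span_monic P hPm hPd g.natDegree g hgd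
  have horth : Bi μ (P k) g = 0 := by
    rw [hav, Bi_sum_right hmom]
    apply Finset.sum_eq_zero
    intro j hj
    rw [Finset.mem_range] at hj
    have hjk : k ≠ j := by omega
    rw [Bi_smul_right, BiP P hPo, if_neg hjk, mul_zero]
  -- Bi (P k) g = ∫ (x - c) * g(x)^2
  have hBi : Bi μ (P k) g = ∫ x, (x - c) * (g.eval x)^2 ∂μ := by
    rw [Bi]
    congr 1
    funext x
    conv_lhs => rw [← hdvd]
    simp [pow_two]
    ring
  have hint : Integrable (fun x => (x - c) * (g.eval x)^2) μ := by
    have := integ_poly hmom ((X - C c) * (g * g))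
    simpa [pow_two, mul_assoc] using this
  have hnn : 0 ≤ᵐ[μ] fun x => (x - c) * (g.eval x)^2 := by
    filter_upwards [hc] with x hx
    exact mul_nonneg (le_of_lt (sub_pos.mpr hx)) (sq_nonneg _)
  have hzero : (fun x => (x - c) * (g.eval x)^2) =ᵐ[μ] 0 := by
    rw [← integral_eq_zero_iff_of_nonneg_ae hnn hint, ← hBi, horth]
  have hgz : (fun x => (g.eval x)^2) =ᵐ[μ] 0 := by
    filter_upwards [hzero, hc] with x hx hcx
    have : (x - c) ≠ 0 := ne_of_gt (sub_pos.mpr hcx)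
    simpa [this] using hx
  have : (0:ℝ) < ∫ x, (g.eval x)^2 ∂μ := hpos g hgne
  rw [integral_congr_ae hgz] at this
  simp at this

end Kernel

/-- for every `n ≥ 0`,
`r_n^{[2]} = r_{n+1}·(K_n(c,c)/K_{n+1}(c,c))^{1/2}`, equivalently
`K_{n+1}(c,c)/K_n(c,c) = (r_{n+1}/r_n^{[2]})²`. -/
theorem stmt2
    (μ : Measure ℝ) [IsFiniteMeasure μ]
    (hmom : ∀ n : ℕ, Integrable (fun x : ℝ => x ^ n) μ)
    (hpos : ∀ q : Polynomial ℝ, q ≠ 0 → 0 < ∫ x, q.eval x ^ 2 ∂μ)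
    (c : ℝ) (hc : ∀ᵐ x ∂μ, c < x)
    (P : ℕ → Polynomial ℝ) (hPm : ∀ n, (P n).Monic) (hPd : ∀ n, (P n).natDegree = n)
    (hPo : ∀ m n, m ≠ n → ∫ x, (P m).eval x * (P n).eval x ∂μ = 0)
    (P2 : ℕ → Polynomial ℝ) (hP2m : ∀ n, (P2 n).Monic) (hP2d : ∀ n, (P2 n).natDegree = n)
    (hP2o : ∀ m n, m ≠ n → ∫ x, (P2 m).eval x * (P2 n).eval x * (x - c) ^ 2 ∂μ = 0) :
    ∀ n : ℕ,
      r2C μ c P2 n = rC μ P (n + 1) * Real.sqrt (Kcc μ P c n / Kcc μ P c (n + 1))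
      ∧ Kcc μ P c (n + 1) / Kcc μ P c n = (rC μ P (n + 1) / r2C μ c P2 n) ^ 2 := by
  -- weighted orthogonality in Bi form
  have BiP2 : ∀ a b : ℕ, a ≠ b →
      Bi μ ((X - C c) * P2 a) ((X - C c) * P2 b) = 0 := by
    intro a b hab
    have heq : Bi μ ((X - C c) * P2 a) ((X - C c) * P2 b)
        = ∫ x, (P2 a).eval x * (P2 b).eval x * (x - c) ^ 2 ∂μ := by
      unfold Bi
      apply integral_congr_ae
      filter_upwards with x
      simp only [Polynomial.eval_mul, Polynomial.eval_sub, Polynomial.eval_X, Polynomial.eval_C]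
      ring
    rw [heq]
    exact hP2o a b hab
  intro n
  set Kn := Kcc μ P c n with hKndef
  set Kn1 := Kcc μ P c (n + 1) with hKn1def
  set Np := nrmSq μ (P (n + 1)) with hNpdef
  set pc := (P (n + 1)).eval c with hpcdef
  have hNp : 0 < Np := hpos _ (hPm _).ne_zero
  have hKn : 0 < Kn := Kcc_pos hpos P hPm hPd c n
  have hKn1 : 0 < Kn1 := Kcc_pos hpos P hPm hPd c (n + 1)
  have hpc : pc ≠ 0 := Peval_ne hmom hpos P hPm hPd hPo c hc (n + 1)
  set lam := Kn * pc / Np with hlamdef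
  have hlam : lam ≠ 0 := by
    rw [hlamdef]
    exact div_ne_zero (mul_ne_zero (ne_of_gt hKn) hpc) (ne_of_gt hNp)
  set T := C Kn * KpAux μ P c (n + 1) - C Kn1 * KpAux μ P c n with hTdef
  set V := (X - C c) * P2 n with hVdef
  -- degrees of V
  have hVm : V.Monic := (Polynomial.monic_X_sub_C c).mul (hP2m n)
  have hVnd : V.natDegree = n + 1 := by
    rw [hVdef, Polynomial.natDegree_mul (Polynomial.X_sub_C_ne_zero c) (hP2m n).ne_zero,
      Polynomial.natDegree_X_sub_C, hP2d, add_comm]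
  have hVd : V.degree ≤ ((n + 1 : ℕ) : WithBot ℕ) := by
    rw [Polynomial.degree_eq_natDegree hVm.ne_zero, hVnd]
  have hVc1 : V.coeff (n + 1) = 1 := by
    have := hVm.coeff_natDegree
    rwa [hVnd] at this
  -- coefficients of T
  have hKp1c : (KpAux μ P c (n + 1)).coeff (n + 1) = pc / Np := by
    rw [KpAux, Polynomial.finset_sum_coeff]
    rw [Finset.sum_eq_single (n + 1)]
    · rw [Polynomial.coeff_C_mul]
      have h1 : (P (n + 1)).coeff (n + 1) = 1 := by
        have := (hPm (n + 1)).coeff_natDegree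
        rwa [hPd] at this
      rw [h1, mul_one]
    · intro k hk hkne
      rw [Finset.mem_range] at hk
      apply Polynomial.coeff_eq_zero_of_degree_lt
      have hdk : (C ((P k).eval c / nrmSq μ (P k)) * P k).degree ≤ (k : WithBot ℕ) := by
        refine le_trans (degCmul _ _) ?_
        rw [Polynomial.degree_eq_natDegree (hPm k).ne_zero, hPd]
      exact lt_of_le_of_lt hdk (by exact_mod_cast by omega)
    · intro h
      exact absurd (Finset.mem_range.mpr (by omega)) h
  have hKpc : (KpAux μ P c n).coeff (n + 1) = 0 :=
    Polynomial.coeff_eq_zero_of_degree_lt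
      (lt_of_le_of_lt (Kp_degree P hPm hPd c n) (by exact_mod_cast by omega))
  have hTd : T.degree ≤ ((n + 1 : ℕ) : WithBot ℕ) := by
    rw [hTdef]
    refine le_trans (Polynomial.degree_sub_le _ _) (max_le ?_ ?_)
    · exact le_trans (degCmul _ _) (Kp_degree P hPm hPd c (n + 1))
    · exact le_trans (degCmul _ _) (le_trans (Kp_degree P hPm hPd c n) (by exact_mod_cast by omega))
  set W := C lam * V - T with hWdef
  -- (a) degree W ≤ n
  have hWd : W.degree ≤ (n : ℕ) := by
    rw [Polynomial.degree_le_iff_coeff_zero]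
    intro k hk
    have hk1 : n < k := by exact_mod_cast hk
    rcases eq_or_lt_of_le (Nat.succ_le_of_lt hk1) with h | h
    · -- k = n + 1
      rw [hWdef, Polynomial.coeff_sub, Polynomial.coeff_C_mul, ← h, hVc1, hTdef,
        Polynomial.coeff_sub, Polynomial.coeff_C_mul, Polynomial.coeff_C_mul, hKp1c, hKpc,
        hlamdef]
      field_simp
      ring
    · have h1 : (C lam * V).coeff k = 0 :=
        Polynomial.coeff_eq_zero_of_degree_lt
          (lt_of_le_of_lt (le_trans (degCmul _ _) hVd) (by exact_mod_cast h))
      have h2 : T.coeff k = 0 :=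
        Polynomial.coeff_eq_zero_of_degree_lt (lt_of_le_of_lt hTd (by exact_mod_cast h))
      rw [hWdef, Polynomial.coeff_sub, h1, h2, sub_zero]
  -- (b) W(c) = 0
  have hWc : W.eval c = 0 := by
    simp only [hWdef, hTdef, hVdef, Polynomial.eval_sub, Polynomial.eval_mul,
      Polynomial.eval_C, Polynomial.eval_X, Kp_eval_c]
    rw [← hKndef, ← hKn1def]
    ring
  -- (c) orthogonality of W against (X - C c) * q of degree ≤ n
  have ortho : ∀ q : Polynomial ℝ, ((X - C c) * q).degree ≤ (n : WithBot ℕ) →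
      Bi μ W ((X - C c) * q) = 0 := by
    intro q hq
    have hqc : ((X - C c) * q).eval c = 0 := by simp
    have part2 : Bi μ T ((X - C c) * q) = 0 := by
      rw [hTdef, Bi_sub_left hmom, Bi_smul_left, Bi_smul_left,
        repro hmom hpos P hPm hPd hPo c (n + 1) _ (le_trans hq (by exact_mod_cast by omega)),
        repro hmom hpos P hPm hPd hPo c n _ hq, hqc]
      ring
    have part1 : Bi μ V ((X - C c) * q) = 0 := by
      by_cases hq0 : q = 0
      · simp [Bi, hq0]
      · have hdq : ((X - C c) * q).degree = 1 + q.degree := by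
          rw [Polynomial.degree_mul, Polynomial.degree_X_sub_C]
        have hqd : 1 + q.natDegree ≤ n := by
          rw [hdq, Polynomial.degree_eq_natDegree hq0] at hq
          exact_mod_cast hq
        obtain ⟨m, hm⟩ : ∃ m, n = m + 1 := ⟨n - 1, by omega⟩
        have hqdm : q.degree ≤ ((m : ℕ) : WithBot ℕ) :=
          le_trans Polynomial.degree_le_natDegree (by exact_mod_cast by omega)
        obtain ⟨a, ha⟩ := span_monic P2 hP2m hP2d m q hqdm
        rw [ha, Finset.mul_sum]
        have hcomm : ∀ j, (X - C c) * (C (a j) * P2 j) = C (a j) * ((X - C c) * P2 j) := by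
          intro j; ring
        simp only [hcomm]
        rw [Bi_sum_right hmom]
        apply Finset.sum_eq_zero
        intro j hj
        rw [Finset.mem_range] at hj
        rw [Bi_smul_right, hVdef, BiP2 n j (by omega), mul_zero]
    rw [hWdef, Bi_sub_left hmom, Bi_smul_left, part1, part2]
    ring
  -- (d) W = 0
  have hW0 : W = 0 := by
    by_contra hW0
    have hWfac : (X - C c) * (W /ₘ (X - C c)) = W :=
      Polynomial.mul_divByMonic_eq_iff_isRoot.mpr hWc
    have h0 : Bi μ W W = 0 := by
      have := ortho (W /ₘ (X - C c)) (by rw [hWfac]; exact hWd)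
      rwa [hWfac] at this
    have h1 : 0 < Bi μ W W := by
      rw [Bi_self]
      exact hpos W hW0
    linarith
  have hkey : C lam * V = T := by
    have := sub_eq_zero.mp hW0
    exact this
  -- Bi T T
  have hBTT : Bi μ T T = Kn * Kn1 * (Kn1 - Kn) := by
    have e11 : Bi μ (KpAux μ P c (n + 1)) (KpAux μ P c (n + 1)) = Kcc μ P c (n + 1) :=
      BiKp hmom hpos P hPm hPd hPo c (le_refl (n + 1))
    have e10 : Bi μ (KpAux μ P c (n + 1)) (KpAux μ P c n) = Kcc μ P c n :=
      BiKp hmom hpos P hPm hPd hPo c (Nat.le_succ n)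
    have e01 : Bi μ (KpAux μ P c n) (KpAux μ P c (n + 1)) = Kcc μ P c n := by
      rw [Bi_symm]; exact e10
    have e00 : Bi μ (KpAux μ P c n) (KpAux μ P c n) = Kcc μ P c n :=
      BiKp hmom hpos P hPm hPd hPo c (le_refl n)
    rw [hTdef, Bi_sub_left hmom, Bi_sub_right hmom, Bi_sub_right hmom]
    simp only [Bi_smul_left, Bi_smul_right]
    rw [e11, e10, e01, e00, ← hKndef, ← hKn1def]
    ring
  have hdiff : Kn1 - Kn = pc ^ 2 / Np := by
    rw [hKn1def, hKndef, Kcc, Kcc, Finset.sum_range_succ]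
    rw [← hpcdef, ← hNpdef]
    ring
  -- Bi V V
  have hBVV : Bi μ V V = Np * Kn1 / Kn := by
    have h2 : lam ^ 2 * Bi μ V V = Kn * Kn1 * (pc ^ 2 / Np) := by
      have := congrArg (fun p => Bi μ p p) hkey
      simp only [Bi_smul_left, Bi_smul_right] at this
      rw [hBTT, hdiff] at this
      rw [← this]; ring
    have h3 : Bi μ V V = Kn * Kn1 * (pc ^ 2 / Np) / lam ^ 2 := by
      rw [← h2, mul_comm, mul_div_assoc, div_self (pow_ne_zero 2 hlam), mul_one]
    have hNp' : Np ≠ 0 := ne_of_gt hNp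
    have hKn' : Kn ≠ 0 := ne_of_gt hKn
    rw [h3, hlamdef]
    field_simp
  have hN2 : nrmSq2 μ c (P2 n) = Np * Kn1 / Kn := by
    rw [← hBVV, nrmSq2, Bi]
    congr 1
    funext x
    rw [hVdef]
    simp only [Polynomial.eval_mul, Polynomial.eval_sub, Polynomial.eval_X, Polynomial.eval_C]
    ring
  -- final algebra
  have hsA : (0:ℝ) < Real.sqrt Np := Real.sqrt_pos.mpr hNp
  have hsK : (0:ℝ) < Real.sqrt Kn := Real.sqrt_pos.mpr hKn
  have hsK1 : (0:ℝ) < Real.sqrt Kn1 := Real.sqrt_pos.mpr hKn1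
  have hsplit : Real.sqrt (Np * Kn1 / Kn) = Real.sqrt Np * Real.sqrt Kn1 / Real.sqrt Kn := by
    rw [Real.sqrt_div (by positivity), Real.sqrt_mul (le_of_lt hNp)]
  have hsplit2 : Real.sqrt (Kn / Kn1) = Real.sqrt Kn / Real.sqrt Kn1 :=
    Real.sqrt_div (le_of_lt hKn) _
  have hr2 : r2C μ c P2 n = 1 / Real.sqrt Np * (Real.sqrt Kn / Real.sqrt Kn1) := by
    rw [r2C, hN2, hsplit]
    field_simp
  have goal1 : r2C μ c P2 n = rC μ P (n + 1) * Real.sqrt (Kn / Kn1) := by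
    rw [hr2, hsplit2, rC, ← hNpdef]
  refine ⟨goal1, ?_⟩
  rw [goal1, hsplit2, rC, ← hNpdef]
  have h9 : (1 / Real.sqrt Np / (1 / Real.sqrt Np * (Real.sqrt Kn / Real.sqrt Kn1)))
      = Real.sqrt Kn1 / Real.sqrt Kn := by
    field_simp
  rw [h9, div_pow, Real.sq_sqrt (le_of_lt hKn1), Real.sq_sqrt (le_of_lt hKn)]
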